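/- Let K be a 3-uniform hypergraph on a vertex set V, let δ ∈ (0, 1/10), and suppose V'' ⊆ V has |V''| > 3δ|V|, every pair of distinct vertices in V'' is active in K, and every active pair uv of K satisfies |N_K(u,v)| ≥ (1-δ)|V|. Then for any two edges e = xyz and e' = x'y'z' of K with all vertices in V'', there is a pseudo-path in K using only vertices of V'' ∪ (e ∪ e') connecting e and e'. In particular, K restricted to V'' has a single connected component containing all edges induced on V''. -/

import Mathlib

open Finset
open scoped Classical

/-- The codegree set `N_K(u,v)`. -/
noncomputable def codegSet {V : Type*} [Fintype V] [DecidableEq V]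
    (K : Finset (Finset V)) (u v : V) : Finset V :=
  Finset.univ.filter (fun w => ({u, v, w} : Finset V) ∈ K)

lemma mem_codegSet' {V : Type*} [Fintype V] [DecidableEq V]
    {K : Finset (Finset V)} {u v w : V} :
    w ∈ codegSet K u v ↔ ({u, v, w} : Finset V) ∈ K := by
  simp [codegSet]

lemma codeg_ne' {V : Type*} [Fintype V] [DecidableEq V]
    {K : Finset (Finset V)} (h3 : ∀ e ∈ K, e.card = 3) {u v w : V}
    (hw : w ∈ codegSet K u v) : w ≠ u ∧ w ≠ v := by
  have hm := mem_codegSet'.mp hw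
  have hc := h3 _ hm
  constructor <;> rintro rfl
  · have h1 : ({w, v, w} : Finset V) = {w, v} := by
      ext t; constructor <;> (intro h; simp at h ⊢; tauto)
    rw [h1] at hc
    have := Finset.card_insert_le w ({v} : Finset V)
    simp only [Finset.card_singleton] at this; omega
  · have h1 : ({u, w, w} : Finset V) = {u, w} := by
      ext t; constructor <;> (intro h; simp at h ⊢; tauto)
    rw [h1] at hc
    have := Finset.card_insert_le u ({w} : Finset V)
    simp only [Finset.card_singleton] at this; omega

lemma exists_avoid' {V : Type*} [DecidableEq V] {S : Finset V} (hS : 3 ≤ S.card)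
    (a b : V) : ∃ w ∈ S, w ≠ a ∧ w ≠ b := by
  have hns : ¬ S ⊆ ({a, b} : Finset V) := by
    intro h
    have h1 := Finset.card_le_card h
    have h2 := Finset.card_insert_le a ({b} : Finset V)
    simp only [Finset.card_singleton] at h2; omega
  obtain ⟨w, hw, hw2⟩ := Finset.not_subset.mp hns
  simp at hw2
  exact ⟨w, hw, hw2⟩

lemma card_inter_eq_two' {V : Type*} [DecidableEq V] {s t : Finset V} {a b : V}
    (h : s ∩ t = {a, b}) (hab : a ≠ b) : (s ∩ t).card = 2 := by
  rw [h]; exact Finset.card_pair hab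

lemma pairA {α : Type*} [DecidableEq α] {p q r s : α}
    (hrp : r ≠ p) (hrq : r ≠ q) (hrs : r ≠ s) :
    ({p, q, r} : Finset α) ∩ {p, q, s} = {p, q} := by
  ext t
  simp only [Finset.mem_inter, Finset.mem_insert, Finset.mem_singleton]
  aesop

lemma pairB {α : Type*} [DecidableEq α] {p q r s : α}
    (hqp : q ≠ p) (hqr : q ≠ r) (hqs : q ≠ s) :
    ({p, q, r} : Finset α) ∩ {p, s, r} = {p, r} := by
  ext t
  simp only [Finset.mem_inter, Finset.mem_insert, Finset.mem_singleton]
  aesop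

lemma pairD {α : Type*} [DecidableEq α] {p q r s : α}
    (hps : p ≠ s) :
    ({p, q, r} : Finset α) ∩ {q, s, r} = {q, r} := by
  ext t
  simp only [Finset.mem_inter, Finset.mem_insert, Finset.mem_singleton]
  aesop

lemma key_count' {V : Type*} [Fintype V] [DecidableEq V]
    (K : Finset (Finset V)) (δ : ℝ)
    (V'' : Finset V)
    (hbig : (V''.card : ℝ) > 3 * δ * (Fintype.card V))
    (hactive : ∀ u ∈ V'', ∀ v ∈ V'', u ≠ v → (codegSet K u v).Nonempty)
    (hcodeg : ∀ u v : V, u ≠ v → (codegSet K u v).Nonempty →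
      ((codegSet K u v).card : ℝ) ≥ (1 - δ) * (Fintype.card V))
    {u v u' v' : V} (hu : u ∈ V'') (hv : v ∈ V'') (hu' : u' ∈ V'') (hv' : v' ∈ V'')
    (huv : u ≠ v) (hu'v' : u' ≠ v') :
    3 * (((codegSet K u v ∩ codegSet K u' v') ∩ V'').card : ℝ) > (V''.card : ℝ) := by
  set A := codegSet K u v with hA
  set B := codegSet K u' v' with hB
  have hAc : ((A.card : ℝ)) ≥ (1 - δ) * (Fintype.card V) :=
    hcodeg u v huv (hactive u hu v hv huv)
  have hBc : ((B.card : ℝ)) ≥ (1 - δ) * (Fintype.card V) :=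
    hcodeg u' v' hu'v' (hactive u' hu' v' hv' hu'v')
  have hsub : V'' ⊆ ((A ∩ B) ∩ V'') ∪ ((V'' \ A) ∪ (V'' \ B)) := by
    intro t ht
    by_cases htA : t ∈ A <;> by_cases htB : t ∈ B <;> simp [ht, htA, htB]
  have hcard : V''.card ≤ ((A ∩ B) ∩ V'').card + ((V'' \ A).card + (V'' \ B).card) :=
    le_trans (Finset.card_le_card hsub)
      (le_trans (Finset.card_union_le _ _) (by gcongr; exact Finset.card_union_le _ _))
  have hVA : (V'' \ A).card ≤ Fintype.card V - A.card := by
    have h1 : V'' \ A ⊆ Finset.univ \ A := by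
      intro t ht; simp at ht ⊢; exact ht.2
    have h2 := Finset.card_le_card h1
    rwa [Finset.card_sdiff_of_subset (Finset.subset_univ A), Finset.card_univ] at h2
  have hVB : (V'' \ B).card ≤ Fintype.card V - B.card := by
    have h1 : V'' \ B ⊆ Finset.univ \ B := by
      intro t ht; simp at ht ⊢; exact ht.2
    have h2 := Finset.card_le_card h1
    rwa [Finset.card_sdiff_of_subset (Finset.subset_univ B), Finset.card_univ] at h2
  have hAu : A.card ≤ Fintype.card V := by
    rw [← Finset.card_univ]; exact Finset.card_le_card (Finset.subset_univ A)
  have hBu : B.card ≤ Fintype.card V := by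
    rw [← Finset.card_univ]; exact Finset.card_le_card (Finset.subset_univ B)
  have hVAr : ((V'' \ A).card : ℝ) ≤ (Fintype.card V : ℝ) - A.card := by
    have := (Nat.cast_le (α := ℝ)).mpr hVA
    rwa [Nat.cast_sub hAu] at this
  have hVBr : ((V'' \ B).card : ℝ) ≤ (Fintype.card V : ℝ) - B.card := by
    have := (Nat.cast_le (α := ℝ)).mpr hVB
    rwa [Nat.cast_sub hBu] at this
  have hcardr : (V''.card : ℝ) ≤ (((A ∩ B) ∩ V'').card : ℝ) +
      ((V'' \ A).card : ℝ) + ((V'' \ B).card : ℝ) := by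
    have := (Nat.cast_le (α := ℝ)).mpr hcard
    push_cast at this
    linarith
  nlinarith [hcardr, hVAr, hVBr, hAc, hBc, hbig]

set_option maxHeartbeats 800000 in
/-- If `V'' ⊆ V` has `|V''| > 3δ|V|` (with `0 < δ < 1/10`), every pair of
distinct vertices of `V''` is active in `K`, and every active pair of `K` has codegree
at least `(1-δ)|V|`, then any two edges `e, e'` of `K` contained in `V''` are connected
by a pseudo-path of `K` all of whose edges use only vertices of `V'' ∪ e ∪ e'`. -/
theorem pseudo_path_inside_good_set {V : Type*} [Fintype V] [DecidableEq V]
    (K : Finset (Finset V)) (h3 : ∀ e ∈ K, e.card = 3)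
    (δ : ℝ) (hδ0 : 0 < δ) (hδ1 : δ < 1 / 10)
    (V'' : Finset V)
    (hbig : (V''.card : ℝ) > 3 * δ * (Fintype.card V))
    (hactive : ∀ u ∈ V'', ∀ v ∈ V'', u ≠ v → (codegSet K u v).Nonempty)
    (hcodeg : ∀ u v : V, u ≠ v → (codegSet K u v).Nonempty →
      ((codegSet K u v).card : ℝ) ≥ (1 - δ) * (Fintype.card V)) :
    ∀ e ∈ K, ∀ e' ∈ K, e ⊆ V'' → e' ⊆ V'' →
      ∃ p : List (Finset V), p ≠ [] ∧ p.head? = some e ∧ p.getLast? = some e' ∧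
        (∀ g ∈ p, g ∈ K ∧ g ⊆ V'' ∪ e ∪ e') ∧
        p.Chain' (fun a b => (a ∩ b).card = 2) := by
  intro e he e' he' heV heV'
  have hVsub : V'' ⊆ V'' ∪ e ∪ e' :=
    Finset.Subset.trans Finset.subset_union_left Finset.subset_union_left
  have heVs : e ⊆ V'' ∪ e ∪ e' := heV.trans hVsub
  have heVs' : e' ⊆ V'' ∪ e ∪ e' := heV'.trans hVsub
  by_cases heq : e = e'
  · subst heq
    refine ⟨[e], by simp, by simp, by simp, ?_, List.isChain_singleton _⟩
    intro g hg
    simp only [List.mem_cons, List.not_mem_nil, or_false] at hg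
    subst hg
    exact ⟨he, heVs⟩
  have hle3 : (e ∩ e').card ≤ 3 :=
    le_trans (Finset.card_le_card Finset.inter_subset_left) (le_of_eq (h3 e he))
  have hne3 : (e ∩ e').card ≠ 3 := by
    intro h
    have h1 : e ∩ e' = e := Finset.eq_of_subset_of_card_le Finset.inter_subset_left
      (by rw [h3 e he, h])
    have h2 : e ⊆ e' := by rw [← h1]; exact Finset.inter_subset_right
    exact heq (Finset.eq_of_subset_of_card_le h2 (by rw [h3 e he, h3 e' he']))
  have hV3 : 3 ≤ V''.card := by
    rw [← h3 e he]; exact Finset.card_le_card heV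
  obtain h2 | h1 | h0 : (e ∩ e').card = 2 ∨ (e ∩ e').card = 1 ∨ (e ∩ e').card = 0 := by
    omega
  -- Case |e ∩ e'| = 2
  · refine ⟨[e, e'], by simp, by simp, by simp, ?_, ?_⟩
    · intro g hg
      simp only [List.mem_cons, List.not_mem_nil, or_false] at hg
      rcases hg with rfl | rfl
      · exact ⟨he, heVs⟩
      · exact ⟨he', heVs'⟩
    · simpa [List.Chain', List.isChain_cons_cons] using h2
  -- Case |e ∩ e'| = 1
  · obtain ⟨a, ha⟩ := Finset.card_eq_one.mp h1
    have hae : a ∈ e := by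
      have : a ∈ e ∩ e' := by rw [ha]; exact Finset.mem_singleton_self a
      exact (Finset.mem_inter.mp this).1
    have hae' : a ∈ e' := by
      have : a ∈ e ∩ e' := by rw [ha]; exact Finset.mem_singleton_self a
      exact (Finset.mem_inter.mp this).2
    have h2e : (e.erase a).card = 2 := by
      rw [Finset.card_erase_of_mem hae, h3 e he]
    have h2e' : (e'.erase a).card = 2 := by
      rw [Finset.card_erase_of_mem hae', h3 e' he']
    obtain ⟨y, z, hyz, hyzE⟩ := Finset.card_eq_two.mp h2e
    obtain ⟨y', z', hyz', hyzE'⟩ := Finset.card_eq_two.mp h2e'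
    have hy' : y ∈ e.erase a := by rw [hyzE]; simp
    have hz' : z ∈ e.erase a := by rw [hyzE]; simp
    have hy'2 : y' ∈ e'.erase a := by rw [hyzE']; simp
    have hz'2 : z' ∈ e'.erase a := by rw [hyzE']; simp
    have hya : y ≠ a := (Finset.mem_erase.mp hy').1
    have hye : y ∈ e := (Finset.mem_erase.mp hy').2
    have hza : z ≠ a := (Finset.mem_erase.mp hz').1
    have hze : z ∈ e := (Finset.mem_erase.mp hz').2
    have hy'a : y' ≠ a := (Finset.mem_erase.mp hy'2).1
    have hy'e : y' ∈ e' := (Finset.mem_erase.mp hy'2).2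
    have hz'a : z' ≠ a := (Finset.mem_erase.mp hz'2).1
    have hz'e : z' ∈ e' := (Finset.mem_erase.mp hz'2).2
    have hee : e = {a, y, z} := by
      have h4 := Finset.insert_erase hae
      rw [hyzE] at h4; exact h4.symm
    have hee' : e' = {a, y', z'} := by
      have h4 := Finset.insert_erase hae'
      rw [hyzE'] at h4; exact h4.symm
    -- cross non-membership
    have honly : ∀ t, t ∈ e → t ∈ e' → t = a := by
      intro t ht ht'
      have : t ∈ e ∩ e' := Finset.mem_inter.mpr ⟨ht, ht'⟩
      rw [ha] at this; exact Finset.mem_singleton.mp this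
    have hyE' : y ∉ e' := fun h => hya (honly y hye h)
    have hzE' : z ∉ e' := fun h => hza (honly z hze h)
    have hy'E : y' ∉ e := fun h => hy'a (honly y' h hy'e)
    have hz'E : z' ∉ e := fun h => hz'a (honly z' h hz'e)
    have hyy' : y ≠ y' := fun h => hyE' (h ▸ hy'e)
    have hyz2' : y ≠ z' := fun h => hyE' (h ▸ hz'e)
    have hzy' : z ≠ y' := fun h => hzE' (h ▸ hy'e)
    have hzz' : z ≠ z' := fun h => hzE' (h ▸ hz'e)
    -- pick w
    have hkc := key_count' K δ V'' hbig hactive hcodeg (heV hae) (heV hye)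
      (heV hae) (heV' hy'e) (Ne.symm hya) (Ne.symm hy'a)
    have hSne : ((codegSet K a y ∩ codegSet K a y') ∩ V'').Nonempty := by
      rw [← Finset.card_pos]
      by_contra hcon
      push_neg at hcon
      have h0' : ((codegSet K a y ∩ codegSet K a y') ∩ V'').card = 0 := by omega
      rw [h0'] at hkc
      have h3' : (3:ℝ) ≤ (V''.card : ℝ) := by exact_mod_cast hV3
      norm_num at hkc
      linarith
    obtain ⟨w, hwS⟩ := hSne
    have hw1 : w ∈ codegSet K a y := (Finset.mem_inter.mp (Finset.mem_inter.mp hwS).1).1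
    have hw2 : w ∈ codegSet K a y' := (Finset.mem_inter.mp (Finset.mem_inter.mp hwS).1).2
    have hwV : w ∈ V'' := (Finset.mem_inter.mp hwS).2
    have hK1 : ({a, y, w} : Finset V) ∈ K := mem_codegSet'.mp hw1
    have hK2 : ({a, y', w} : Finset V) ∈ K := mem_codegSet'.mp hw2
    obtain ⟨hwa, hwy⟩ := codeg_ne' h3 hw1
    obtain ⟨_, hwy'⟩ := codeg_ne' h3 hw2
    have haV : a ∈ V'' := heV hae
    have hyV : y ∈ V'' := heV hye
    have hy'V : y' ∈ V'' := heV' hy'e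
    by_cases hwz : w = z
    · -- path [e, {a, y', z}, e']
      rw [hwz] at hK2
      refine ⟨[e, {a, y', z}, e'], by simp, by simp, by simp, ?_, ?_⟩
      · intro g hg
        simp only [List.mem_cons, List.not_mem_nil, or_false] at hg
        rcases hg with rfl | rfl | rfl
        · exact ⟨he, heVs⟩
        · exact ⟨hK2, Finset.Subset.trans (by
            simp [Finset.insert_subset_iff, haV, hy'V, heV hze]) hVsub⟩
        · exact ⟨he', heVs'⟩
      · refine List.isChain_cons_cons.mpr ⟨?_, List.isChain_cons_cons.mpr ⟨?_, List.isChain_singleton _⟩⟩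
        · rw [hee]
          exact card_inter_eq_two' (pairB hya hyz hyy') hza.symm
        · rw [hee']
          exact card_inter_eq_two' (pairA hza hzy' hzz') hy'a.symm
    · by_cases hwz' : w = z'
      · -- path [e, {a, y, z'}, e']
        rw [hwz'] at hK1
        refine ⟨[e, {a, y, z'}, e'], by simp, by simp, by simp, ?_, ?_⟩
        · intro g hg
          simp only [List.mem_cons, List.not_mem_nil, or_false] at hg
          rcases hg with rfl | rfl | rfl
          · exact ⟨he, heVs⟩
          · exact ⟨hK1, Finset.Subset.trans (by
              simp [Finset.insert_subset_iff, haV, hyV, heV' hz'e]) hVsub⟩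
          · exact ⟨he', heVs'⟩
        · refine List.isChain_cons_cons.mpr ⟨?_, List.isChain_cons_cons.mpr ⟨?_, List.isChain_singleton _⟩⟩
          · rw [hee]
            exact card_inter_eq_two' (pairA hza (Ne.symm hyz) hzz') hya.symm
          · rw [hee']
            exact card_inter_eq_two' (pairB hya hyz2' hyy') hz'a.symm
      · -- generic path [e, {a, y, w}, {a, y', w}, e']
        refine ⟨[e, {a, y, w}, {a, y', w}, e'], by simp, by simp, by simp, ?_, ?_⟩
        · intro g hg
          simp only [List.mem_cons, List.not_mem_nil, or_false] at hg
          rcases hg with rfl | rfl | rfl | rfl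
          · exact ⟨he, heVs⟩
          · exact ⟨hK1, Finset.Subset.trans (by
              simp [Finset.insert_subset_iff, haV, hyV, hwV]) hVsub⟩
          · exact ⟨hK2, Finset.Subset.trans (by
              simp [Finset.insert_subset_iff, haV, hy'V, hwV]) hVsub⟩
          · exact ⟨he', heVs'⟩
        · refine List.isChain_cons_cons.mpr ⟨?_, List.isChain_cons_cons.mpr ⟨?_,
            List.isChain_cons_cons.mpr ⟨?_, List.isChain_singleton _⟩⟩⟩
          · rw [hee]
            exact card_inter_eq_two' (pairA hza (Ne.symm hyz) (Ne.symm hwz)) hya.symm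
          · exact card_inter_eq_two' (pairB hya (Ne.symm hwy) hyy') hwa.symm
          · rw [hee']
            exact card_inter_eq_two' (pairA hwa hwy' hwz') hy'a.symm
  -- Case e ∩ e' = ∅
  · have hdisj : e ∩ e' = ∅ := Finset.card_eq_zero.mp h0
    have hdis : ∀ t, t ∈ e → t ∉ e' := by
      intro t ht ht'
      have : t ∈ e ∩ e' := Finset.mem_inter.mpr ⟨ht, ht'⟩
      rw [hdisj] at this; exact absurd this (Finset.notMem_empty t)
    obtain ⟨x, y, z, hxy, hxz, hyz, hE⟩ := Finset.card_eq_three.mp (h3 e he)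
    obtain ⟨x', y', z', hxy', hxz', hyz', hE'⟩ := Finset.card_eq_three.mp (h3 e' he')
    have hxe : x ∈ e := by rw [hE]; simp
    have hye : y ∈ e := by rw [hE]; simp
    have hze : z ∈ e := by rw [hE]; simp
    have hx'e : x' ∈ e' := by rw [hE']; simp
    have hy'e : y' ∈ e' := by rw [hE']; simp
    have hz'e : z' ∈ e' := by rw [hE']; simp
    have hxx' : x ≠ x' := fun h => hdis x hxe (h ▸ hx'e)
    have hxy'2 : x ≠ y' := fun h => hdis x hxe (h ▸ hy'e)
    have hxz'2 : x ≠ z' := fun h => hdis x hxe (h ▸ hz'e)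
    have hyx' : y ≠ x' := fun h => hdis y hye (h ▸ hx'e)
    have hyy' : y ≠ y' := fun h => hdis y hye (h ▸ hy'e)
    have hyz'2 : y ≠ z' := fun h => hdis y hye (h ▸ hz'e)
    have hzx' : z ≠ x' := fun h => hdis z hze (h ▸ hx'e)
    have hzy' : z ≠ y' := fun h => hdis z hze (h ▸ hy'e)
    have hzz' : z ≠ z' := fun h => hdis z hze (h ▸ hz'e)
    have hV6 : 6 ≤ V''.card := by
      have hd : Disjoint e e' := Finset.disjoint_left.mpr hdis
      have := Finset.card_le_card (Finset.union_subset heV heV')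
      rwa [Finset.card_union_of_disjoint hd, h3 e he, h3 e' he'] at this
    have hcard3 : ∀ (S : Finset V), 3 * ((S.card : ℝ)) > (V''.card : ℝ) → 3 ≤ S.card := by
      intro S hS
      have h6 : (6 : ℝ) ≤ (V''.card : ℝ) := by exact_mod_cast hV6
      have : (2 : ℝ) < (S.card : ℝ) := by linarith
      exact_mod_cast this
    have hS1 : 3 ≤ ((codegSet K x y ∩ codegSet K x x') ∩ V'').card :=
      hcard3 _ (key_count' K δ V'' hbig hactive hcodeg (heV hxe) (heV hye)
        (heV hxe) (heV' hx'e) hxy hxx')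
    have hS2 : 3 ≤ ((codegSet K x x' ∩ codegSet K x' y') ∩ V'').card :=
      hcard3 _ (key_count' K δ V'' hbig hactive hcodeg (heV hxe) (heV' hx'e)
        (heV' hx'e) (heV' hy'e) hxx' hxy')
    obtain ⟨w, hwS, hwz, -⟩ := exists_avoid' hS1 z z
    obtain ⟨u, huS, huz', huw⟩ := exists_avoid' hS2 z' w
    have hw1 : w ∈ codegSet K x y := (Finset.mem_inter.mp (Finset.mem_inter.mp hwS).1).1
    have hw2 : w ∈ codegSet K x x' := (Finset.mem_inter.mp (Finset.mem_inter.mp hwS).1).2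
    have hwV : w ∈ V'' := (Finset.mem_inter.mp hwS).2
    have hu1 : u ∈ codegSet K x x' := (Finset.mem_inter.mp (Finset.mem_inter.mp huS).1).1
    have hu2 : u ∈ codegSet K x' y' := (Finset.mem_inter.mp (Finset.mem_inter.mp huS).1).2
    have huV : u ∈ V'' := (Finset.mem_inter.mp huS).2
    have hK1 : ({x, y, w} : Finset V) ∈ K := mem_codegSet'.mp hw1
    have hK2 : ({x, x', w} : Finset V) ∈ K := mem_codegSet'.mp hw2
    have hK3 : ({x, x', u} : Finset V) ∈ K := mem_codegSet'.mp hu1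
    have hK4 : ({x', y', u} : Finset V) ∈ K := mem_codegSet'.mp hu2
    obtain ⟨hwx, hwy⟩ := codeg_ne' h3 hw1
    obtain ⟨-, hwx'⟩ := codeg_ne' h3 hw2
    obtain ⟨hux, hux'⟩ := codeg_ne' h3 hu1
    obtain ⟨-, huy'⟩ := codeg_ne' h3 hu2
    have hxV : x ∈ V'' := heV hxe
    have hyV : y ∈ V'' := heV hye
    have hx'V : x' ∈ V'' := heV' hx'e
    have hy'V : y' ∈ V'' := heV' hy'e
    refine ⟨[e, {x, y, w}, {x, x', w}, {x, x', u}, {x', y', u}, e'],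
      by simp, by simp, by simp, ?_, ?_⟩
    · intro g hg
      simp only [List.mem_cons, List.not_mem_nil, or_false] at hg
      rcases hg with rfl | rfl | rfl | rfl | rfl | rfl
      · exact ⟨he, heVs⟩
      · exact ⟨hK1, Finset.Subset.trans (by
          simp [Finset.insert_subset_iff, hxV, hyV, hwV]) hVsub⟩
      · exact ⟨hK2, Finset.Subset.trans (by
          simp [Finset.insert_subset_iff, hxV, hx'V, hwV]) hVsub⟩
      · exact ⟨hK3, Finset.Subset.trans (by
          simp [Finset.insert_subset_iff, hxV, hx'V, huV]) hVsub⟩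
      · exact ⟨hK4, Finset.Subset.trans (by
          simp [Finset.insert_subset_iff, hx'V, hy'V, huV]) hVsub⟩
      · exact ⟨he', heVs'⟩
    · refine List.isChain_cons_cons.mpr ⟨?_, List.isChain_cons_cons.mpr ⟨?_,
        List.isChain_cons_cons.mpr ⟨?_, List.isChain_cons_cons.mpr ⟨?_,
        List.isChain_cons_cons.mpr ⟨?_, List.isChain_singleton _⟩⟩⟩⟩⟩
      · rw [hE]
        exact card_inter_eq_two' (pairA (Ne.symm hxz) (Ne.symm hyz) (Ne.symm hwz)) hxy
      · exact card_inter_eq_two' (pairB (Ne.symm hxy) (Ne.symm hwy) hyx') hwx.symm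
      · exact card_inter_eq_two' (pairA hwx hwx' (Ne.symm huw)) hxx'
      · exact card_inter_eq_two' (pairD hxy'2) hux'.symm
      · rw [hE']
        exact card_inter_eq_two' (pairA hux' huy' huz') hxy'
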